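/- Every real linear factor of a hyperbolic homogeneous polynomial in ℝ[x,y] has multiplicity one. -/

import Mathlib

open MvPolynomial

noncomputable def Hess (f : MvPolynomial (Fin 2) ℝ) : MvPolynomial (Fin 2) ℝ :=
  pderiv 0 (pderiv 0 f) * pderiv 1 (pderiv 1 f) - (pderiv 0 (pderiv 1 f)) ^ 2

lemma homog_one_decomp (l : MvPolynomial (Fin 2) ℝ) (hlh : l.IsHomogeneous 1) :
    l = C (coeff (Finsupp.single 0 1) l) * X 0 + C (coeff (Finsupp.single 1 1) l) * X 1 := by
  ext d
  simp only [coeff_add, coeff_C_mul, coeff_X', mul_ite, mul_one, mul_zero]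
  have hdeg : d.degree = d 0 + d 1 := by
    rw [Finsupp.degree_apply]
    rw [Finset.sum_subset (Finset.subset_univ d.support)]
    · exact Fin.sum_univ_two d
    · intro i _ hi
      simpa using hi
  by_cases h0 : (Finsupp.single 0 1 : Fin 2 →₀ ℕ) = d
  · subst h0
    have : (Finsupp.single 1 1 : Fin 2 →₀ ℕ) ≠ Finsupp.single 0 1 := by
      intro h; have := DFunLike.congr_fun h 0; simp at this
    simp [this]
  · by_cases h1 : (Finsupp.single 1 1 : Fin 2 →₀ ℕ) = d
    · subst h1; simp [h0]
    · simp only [if_neg h0, if_neg h1, add_zero]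
      apply hlh.coeff_eq_zero
      rw [hdeg]
      intro h
      have hc : d 0 = 1 ∧ d 1 = 0 ∨ d 0 = 0 ∧ d 1 = 1 := by omega
      rcases hc with ⟨ha, hb⟩ | ⟨ha, hb⟩
      · apply h0; ext i; fin_cases i <;> simp [ha, hb]
      · apply h1; ext i; fin_cases i <;> simp [ha, hb]

lemma hess_sq_eval (g : MvPolynomial (Fin 2) ℝ) (a b : ℝ) :
    eval ![-b, a] (Hess ((C a * X 0 + C b * X 1) ^ 2 * g)) = 0 := by
  simp only [Hess, pderiv_mul, pderiv_pow, map_add, map_sub, map_mul, map_pow, map_ofNat,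
    pderiv_X, pderiv_C, smul_eq_mul, map_natCast, Derivation.map_smul,
    eval_mul, eval_add, eval_sub, eval_pow, eval_C, eval_X, eval_ofNat, map_zero, map_one,
    Matrix.cons_val_zero, Matrix.cons_val_one, Matrix.head_cons, Pi.single_eq_same,
    Pi.single_eq_of_ne (by decide : (1:Fin 2) ≠ 0), Pi.single_eq_of_ne (by decide : (0:Fin 2) ≠ 1)]
  ring

theorem hyperbolic_linear_factors_simple (f : MvPolynomial (Fin 2) ℝ) (n : ℕ)
    (hf : f ≠ 0) (hfh : f.IsHomogeneous n)
    (hhyp : ∀ x y : ℝ, (x, y) ≠ (0, 0) → eval ![x, y] (Hess f) < 0)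
    (l : MvPolynomial (Fin 2) ℝ) (hl : l ≠ 0) (hlh : l.IsHomogeneous 1)
    (hdvd : l ∣ f) : ¬ (l ^ 2 ∣ f) := by
  rintro ⟨g, hg⟩
  set a := coeff (Finsupp.single 0 1) l with ha
  set b := coeff (Finsupp.single 1 1) l with hb
  have hdec : l = C a * X 0 + C b * X 1 := homog_one_decomp l hlh
  have hab : (-b, a) ≠ ((0 : ℝ), (0 : ℝ)) := by
    intro h
    apply hl
    rw [hdec]
    have hb0 : b = 0 := by have := congrArg Prod.fst h; simpa using this
    have ha0 : a = 0 := congrArg Prod.snd h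
    simp [ha0, hb0]
  have hzero : eval ![-b, a] (Hess f) = 0 := by
    rw [hg, hdec]
    exact hess_sq_eval g a b
  have := hhyp (-b) a hab
  rw [hzero] at this
  exact lt_irrefl 0 this
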